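/- Given a real number x and integer n ≥ 2, set p = F_n, q = F_{n+1}, c = ⌊xq⌉ (nearest integer), b = c·((-1)^{n+1}F_n) - q·⌊c·((-1)^{n+1}F_n)/q⌉, and a = c·((-1)^n F_{n-1}) + p·⌊c·((-1)^{n+1}F_n)/q⌉. Then |x - (a + bτ)| ≤ τ^{n-1}(1 - τ^n) and |b| ≤ φ^n, where τ = (√5-1)/2 and φ = τ^{-1}. -/

import Mathlib

noncomputable def tau : ℝ := (Real.sqrt 5 - 1) / 2
noncomputable def phi : ℝ := (Real.sqrt 5 + 1) / 2

lemma sqrt5_sq : Real.sqrt 5 ^ 2 = 5 := Real.sq_sqrt (by norm_num)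

lemma sqrt5_gt : (2:ℝ) < Real.sqrt 5 := by
  nlinarith [sqrt5_sq, Real.sqrt_nonneg 5]

lemma sqrt5_lt : Real.sqrt 5 < 9/4 := by
  nlinarith [sqrt5_sq, Real.sqrt_nonneg 5]

lemma tau_pos : 0 < tau := by unfold tau; linarith [sqrt5_gt]

lemma tau_lt_one : tau < 1 := by unfold tau; linarith [sqrt5_lt]

lemma tau_sq : tau ^ 2 = 1 - tau := by
  unfold tau; nlinarith [sqrt5_sq]

lemma tau_half : 1/2 ≤ tau := by unfold tau; linarith [sqrt5_gt]

lemma phi_sq : phi ^ 2 = phi + 1 := by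
  unfold phi; nlinarith [sqrt5_sq]

lemma one_le_phi : 1 ≤ phi := by unfold phi; linarith [sqrt5_gt]

lemma tau_mul_phi : tau * phi = 1 := by
  unfold tau phi; nlinarith [sqrt5_sq]

lemma tau_pow (m : ℕ) :
    tau ^ (m+1) = (-1:ℝ)^(m+1) * ((Nat.fib m : ℝ) - (Nat.fib (m+1) : ℝ) * tau) := by
  induction m with
  | zero => simp
  | succ m ih =>
    have h := tau_sq
    rw [Nat.fib_add_two]
    push_cast
    calc tau ^ (m+2) = tau ^ (m+1) * tau := by ring
    _ = ((-1:ℝ)^(m+1) * ((Nat.fib m : ℝ) - (Nat.fib (m+1) : ℝ) * tau)) * tau := by rw [ih]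
    _ = (-1:ℝ)^(m+2) * ((Nat.fib (m+1) : ℝ) - ((Nat.fib m : ℝ) + (Nat.fib (m+1):ℝ)) * tau) := by
        linear_combination ((-1:ℝ)^m * (Nat.fib (m+1):ℝ)) * h

lemma one_eq (m : ℕ) :
    (Nat.fib (m+1) : ℝ) * tau ^ m + (Nat.fib m : ℝ) * tau ^ (m+1) = 1 := by
  induction m with
  | zero => simp
  | succ m ih =>
    rw [Nat.fib_add_two]
    push_cast
    linear_combination ih + (Nat.fib (m+1) : ℝ) * tau ^ m * tau_sq

lemma phi_le_fib (m : ℕ) : phi ^ m ≤ (Nat.fib (m+2) : ℝ) := by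
  induction m using Nat.strong_induction_on with
  | _ m ih =>
    match m with
    | 0 => simp
    | 1 =>
      rw [pow_one, show Nat.fib 3 = 2 from rfl]
      unfold phi; push_cast; linarith [sqrt5_lt]
    | (m+2) =>
      have h1 := ih m (by omega)
      have h2 := ih (m+1) (by omega)
      have hps : phi ^ (m+2) = phi ^ (m+1) + phi ^ m := by
        calc phi ^ (m+2) = phi ^ m * phi ^ 2 := by ring
        _ = phi ^ m * (phi + 1) := by rw [phi_sq]
        _ = phi ^ (m+1) + phi ^ m := by ring
      rw [hps, show m+2+2 = (m+2)+2 from rfl, Nat.fib_add_two]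
      push_cast
      linarith

lemma fib_le_phi (m : ℕ) : (Nat.fib (m+1) : ℝ) ≤ phi ^ m := by
  induction m using Nat.strong_induction_on with
  | _ m ih =>
    match m with
    | 0 => simp
    | 1 =>
      rw [pow_one, show Nat.fib 2 = 1 from rfl]
      push_cast; exact one_le_phi
    | (m+2) =>
      have h1 := ih m (by omega)
      have h2 := ih (m+1) (by omega)
      have hps : phi ^ (m+2) = phi ^ (m+1) + phi ^ m := by
        calc phi ^ (m+2) = phi ^ m * phi ^ 2 := by ring
        _ = phi ^ m * (phi + 1) := by rw [phi_sq]
        _ = phi ^ (m+1) + phi ^ m := by ring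
      rw [hps, Nat.fib_add_two]
      push_cast
      linarith

lemma tau_le : tau ≤ 5/8 := by unfold tau; linarith [sqrt5_lt]
theorem stmt18 (x : ℝ) (n : ℕ) (hn : 2 ≤ n)
    (p q u v c t a b : ℤ)
    (hp : p = Nat.fib n) (hq : q = Nat.fib (n + 1))
    (hu : u = (-1) ^ (n + 1) * Nat.fib n) (hv : v = (-1) ^ n * Nat.fib (n - 1))
    (hc : c = round (x * (q : ℝ)))
    (ht : t = round (((c : ℝ) * (u : ℝ)) / (q : ℝ)))
    (ha : a = c * v + p * t) (hb : b = c * u - q * t) :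
    |x - ((a : ℝ) + (b : ℝ) * tau)| ≤ tau ^ (n - 1) * (1 - tau ^ n) ∧
      |(b : ℝ)| ≤ phi ^ n := by
  obtain ⟨k, rfl⟩ : ∃ k, n = k + 2 := ⟨n - 2, by omega⟩
  have hkm : k + 2 - 1 = k + 1 := rfl
  have hqnat : 0 < Nat.fib (k + 3) := Nat.fib_pos.mpr (by omega)
  have hqR : (0:ℝ) < (q:ℝ) := by
    rw [hq, show k+2+1 = k+3 from rfl]; exact_mod_cast hqnat
  have hq0 : (q:ℝ) ≠ 0 := ne_of_gt hqR
  have htp := tau_pos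
  have ht1 := tau_lt_one
  have hts := tau_sq
  have hth := tau_half
  -- rounding errors
  have hd1 : |x * (q:ℝ) - (c:ℝ)| ≤ 1/2 := by rw [hc]; push_cast; exact abs_sub_round _
  have hd2 : |(c:ℝ) * (u:ℝ) / (q:ℝ) - (t:ℝ)| ≤ 1/2 := by rw [ht]; push_cast; exact abs_sub_round _
  -- sign helper
  have hsg : ((-1:ℝ))^(k+3) * (-1:ℝ)^(k+3) = 1 := by
    rw [← pow_add, show (k+3)+(k+3) = 2*(k+3) by ring, pow_mul]; norm_num
  -- identities
  have hT2 : tau ^ (k+2) = (-1:ℝ)^(k+2) * ((Nat.fib (k+1) : ℝ) - (Nat.fib (k+2) : ℝ) * tau) :=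
    tau_pow (k+1)
  have hT3 : tau ^ (k+3) = (-1:ℝ)^(k+3) * ((Nat.fib (k+2) : ℝ) - (Nat.fib (k+3) : ℝ) * tau) :=
    tau_pow (k+2)
  have hE3 : (Nat.fib (k+3) : ℝ) * tau ^ (k+2) + (Nat.fib (k+2) : ℝ) * tau ^ (k+3) = 1 :=
    one_eq (k+2)
  have hvu : (v:ℝ) + (u:ℝ) * tau = tau ^ (k+2) := by
    rw [hu, hv]; push_cast
    linear_combination -hT2
  have hpq : (p:ℝ) - (q:ℝ) * tau = (-1:ℝ)^(k+3) * tau ^ (k+3) := by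
    rw [hp, hq]; push_cast
    linear_combination (-((-1:ℝ)^(k+3))) * hT3
      - ((Nat.fib (k+2):ℝ) - (Nat.fib (k+3):ℝ) * tau) * hsg
  have huP : (u:ℝ) = (-1:ℝ)^(k+3) * (Nat.fib (k+2) : ℝ) := by rw [hu]; push_cast; ring
  have hQfib : (q:ℝ) = (Nat.fib (k+3) : ℝ) := by rw [hq]; push_cast; ring_nf
  have expand : x - ((a:ℝ) + (b:ℝ) * tau)
      = x - (c:ℝ) * ((v:ℝ) + (u:ℝ) * tau) - (t:ℝ) * ((p:ℝ) - (q:ℝ) * tau) := by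
    rw [ha, hb]; push_cast; ring
  -- key decomposition (multiplied through by q)
  have key2 : (x - ((a:ℝ) + (b:ℝ) * tau)) * (q:ℝ)
      = (x * (q:ℝ) - (c:ℝ))
        + ((c:ℝ) * (u:ℝ) - (t:ℝ) * (q:ℝ)) * ((-1:ℝ)^(k+3) * tau ^ (k+3)) := by
    rw [expand, hvu, hpq, huP, hQfib]
    linear_combination (-(c:ℝ)) * hE3
      - (c:ℝ) * (Nat.fib (k+2):ℝ) * tau ^ (k+3) * hsg
  have hcu : (c:ℝ) * (u:ℝ) - (t:ℝ) * (q:ℝ) = ((c:ℝ) * (u:ℝ) / (q:ℝ) - (t:ℝ)) * (q:ℝ) := by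
    field_simp
  have hpow3 : (0:ℝ) < tau ^ (k+3) := pow_pos htp _
  -- error bound
  have hemul : |(x - ((a:ℝ) + (b:ℝ) * tau)) * (q:ℝ)| ≤ 1/2 + tau ^ (k+3) / 2 * (q:ℝ) := by
    rw [key2]
    calc |(x * (q:ℝ) - (c:ℝ))
        + ((c:ℝ) * (u:ℝ) - (t:ℝ) * (q:ℝ)) * ((-1:ℝ)^(k+3) * tau ^ (k+3))|
        ≤ |x * (q:ℝ) - (c:ℝ)|
          + |((c:ℝ) * (u:ℝ) - (t:ℝ) * (q:ℝ)) * ((-1:ℝ)^(k+3) * tau ^ (k+3))| := abs_add_le _ _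
      _ = |x * (q:ℝ) - (c:ℝ)|
          + (|(c:ℝ) * (u:ℝ) / (q:ℝ) - (t:ℝ)| * (q:ℝ)) * tau ^ (k+3) := by
          rw [hcu, abs_mul, abs_mul, abs_mul, abs_pow, abs_neg, abs_one, one_pow, one_mul,
            abs_of_pos hqR, abs_of_pos hpow3]
      _ ≤ 1/2 + ((1/2) * (q:ℝ)) * tau ^ (k+3) := by
          gcongr
      _ = 1/2 + tau ^ (k+3) / 2 * (q:ℝ) := by ring
  have herr : |x - ((a:ℝ) + (b:ℝ) * tau)| ≤ 1 / (2 * (q:ℝ)) + tau ^ (k+3) / 2 := by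
    rw [show (1:ℝ) / (2 * (q:ℝ)) + tau ^ (k+3) / 2
        = (1/2 + tau ^ (k+3) / 2 * (q:ℝ)) / (q:ℝ) by field_simp]
    rw [le_div_iff₀ hqR,
      show |x - ((a:ℝ) + (b:ℝ) * tau)| * (q:ℝ) = |(x - ((a:ℝ) + (b:ℝ) * tau)) * (q:ℝ)| by
        rw [abs_mul, abs_of_pos hqR]]
    exact hemul
  constructor
  · rw [hkm]
    rcases Nat.eq_zero_or_pos k with hk0 | hk1
    · subst hk0
      have hq2 : (q:ℝ) = 2 := by
        rw [hQfib, show Nat.fib 3 = 2 from rfl]; norm_num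
      rw [hq2] at herr
      calc |x - ((a:ℝ) + (b:ℝ) * tau)| ≤ 1 / (2*2) + tau ^ 3 / 2 := herr
        _ ≤ tau ^ 1 * (1 - tau ^ 2) := by nlinarith [hts, tau_le, hth, htp]
    · -- k ≥ 1
      have hfibge : phi ^ (k+1) ≤ (q:ℝ) := by
        rw [hQfib]; exact phi_le_fib (k+1)
      have hinv : 1 / (q:ℝ) ≤ tau ^ (k+1) := by
        rw [div_le_iff₀ hqR]
        have h1 : tau ^ (k+1) * phi ^ (k+1) = 1 := by
          rw [← mul_pow, tau_mul_phi, one_pow]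
        calc (1:ℝ) = tau ^ (k+1) * phi ^ (k+1) := h1.symm
          _ ≤ tau ^ (k+1) * (q:ℝ) :=
              mul_le_mul_of_nonneg_left hfibge (le_of_lt (pow_pos htp _))
      have hsmall : tau ^ (k+1) ≤ 1/2 := by
        calc tau ^ (k+1) ≤ tau ^ 2 :=
            pow_le_pow_of_le_one (le_of_lt htp) (le_of_lt ht1) (by omega)
          _ = 1 - tau := hts
          _ ≤ 1/2 := by linarith
      have hstep : 1 / (2 * (q:ℝ)) + tau ^ (k+3) / 2 ≤ tau ^ (k+1) * (1 - tau ^ (k+2)) := by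
        have h1 : 1 / (2 * (q:ℝ)) ≤ tau ^ (k+1) / 2 := by
          rw [show 1 / (2 * (q:ℝ)) = (1 / (q:ℝ)) / 2 by ring]
          linarith [hinv]
        have h3 : tau ^ (k+3) = tau ^ (k+1) * (1 - tau) := by
          rw [show k+3 = (k+1)+2 by ring, pow_add, hts]
        have hpk1 : (0:ℝ) < tau ^ (k+1) := pow_pos htp _
        have hA : tau ^ (k+2) ≤ tau / 2 := by
          calc tau ^ (k+2) = tau ^ (k+1) * tau := by ring
            _ ≤ (1/2) * tau := mul_le_mul_of_nonneg_right hsmall htp.le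
            _ = tau / 2 := by ring
        have h4 : tau ^ (k+1) * (1 - tau/2) ≤ tau ^ (k+1) * (1 - tau ^ (k+2)) :=
          mul_le_mul_of_nonneg_left (by linarith) hpk1.le
        have h5 : tau ^ (k+1) * (1 - tau/2) = tau ^ (k+1) / 2 + tau ^ (k+3) / 2 := by
          rw [h3]; ring
        linarith [h1, h4, h5]
      linarith [herr, hstep]
  · -- |b| ≤ phi ^ (k+2)
    have hbq : (b:ℝ) = ((c:ℝ) * (u:ℝ) / (q:ℝ) - (t:ℝ)) * (q:ℝ) := by
      rw [hb]; push_cast; field_simp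
    have hble : |(b:ℝ)| ≤ (1/2) * (q:ℝ) := by
      rw [hbq, abs_mul, abs_of_pos hqR]
      exact mul_le_mul_of_nonneg_right hd2 (le_of_lt hqR)
    have hfible : (q:ℝ) ≤ phi ^ (k+2) := by
      rw [hQfib]; exact fib_le_phi (k+2)
    have hphip : (0:ℝ) < phi ^ (k+2) := pow_pos (lt_of_lt_of_le zero_lt_one one_le_phi) _
    linarith
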